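/- For one-dimensional Gaussian distributions N(m1, σ1²) and N(m2, σ2²), the squared 2-Wasserstein distance equals (m1 − m2)² + (σ1 − σ2)². -/

import Mathlib

open MeasureTheory ProbabilityTheory
open scoped NNReal

/-- The squared 2-Wasserstein distance between probability measures on `ℝ`,
defined via couplings. -/
noncomputable def W2sq (μ ν : Measure ℝ) : ℝ :=
  sInf {r : ℝ |
    ∃ γ : Measure (ℝ × ℝ),
      IsProbabilityMeasure γ ∧ γ.map Prod.fst = μ ∧ γ.map Prod.snd = ν ∧
      r = ∫ p, (p.1 - p.2) ^ 2 ∂γ}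

section AuxW2sq
open scoped ENNReal
open Real

noncomputable def stdG : Measure ℝ := gaussianReal 0 1

lemma stdG_eq : stdG = (volume : Measure ℝ).withDensity
    (fun x => ((gaussianPDFReal 0 1 x).toNNReal : ℝ≥0∞)) := by
  rw [stdG, gaussianReal_of_var_ne_zero _ one_ne_zero]
  rfl

lemma pdf_meas : Measurable (fun x => (gaussianPDFReal 0 1 x).toNNReal) :=
  (measurable_gaussianPDFReal 0 1).real_toNNReal

lemma pdf_eq (x : ℝ) : gaussianPDFReal 0 1 x = (Real.sqrt (2 * π))⁻¹ * Real.exp (-(1/2) * x ^ 2) := by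
  simp only [gaussianPDFReal, NNReal.coe_one, mul_one, sub_zero]
  ring_nf

lemma stdG_integral (f : ℝ → ℝ) :
    ∫ x, f x ∂stdG = ∫ x, gaussianPDFReal 0 1 x * f x := by
  rw [stdG_eq, integral_withDensity_eq_integral_smul pdf_meas]
  congr 1 with x
  simp [NNReal.smul_def, Real.coe_toNNReal _ (gaussianPDFReal_nonneg 0 1 x)]

lemma stdG_integrable {f : ℝ → ℝ}
    (h : Integrable (fun x => gaussianPDFReal 0 1 x * f x)) : Integrable f stdG := by
  rw [stdG_eq, integrable_withDensity_iff_integrable_smul pdf_meas]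
  convert h using 2 with x
  · rfl
  simp [NNReal.smul_def, Real.coe_toNNReal _ (gaussianPDFReal_nonneg 0 1 x)]

lemma stdG_integrable_id : Integrable (fun x => x) stdG := by
  apply stdG_integrable
  have := (integrable_mul_exp_neg_mul_sq (b := 1/2) (by norm_num)).const_mul (Real.sqrt (2 * π))⁻¹
  convert this using 2 with x
  rw [pdf_eq]; ring

lemma stdG_integrable_sq : Integrable (fun x => x ^ 2) stdG := by
  apply stdG_integrable
  have := (integrable_rpow_mul_exp_neg_mul_sq (b := 1/2) (by norm_num) (s := 2) (by norm_num)).const_mul (Real.sqrt (2 * π))⁻¹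
  convert this using 2 with x
  rw [pdf_eq]
  rw [show ((2:ℝ) : ℝ) = ((2:ℕ) : ℝ) by norm_num, Real.rpow_natCast]
  ring

lemma stdG_moment_one : ∫ x, x ∂stdG = 0 := by
  rw [stdG_integral]
  set f : ℝ → ℝ := fun x => gaussianPDFReal 0 1 x * x with hf
  have h1 : ∫ x, f (-x) = ∫ x, f x := integral_neg_eq_self f volume
  have h2 : ∀ x, f (-x) = - f x := by
    intro x
    simp only [hf, pdf_eq]
    ring_nf
  rw [funext h2, integral_neg] at h1
  linarith


lemma aux_Ioi : ∫ x in Set.Ioi (0:ℝ), x^2 * rexp (-(1/2) * x^2) = Real.sqrt (2*π) / 2 := by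
  have h2 : ∀ x : ℝ, x ^ (2:ℝ) = x^2 := fun x => by
    rw [show (2:ℝ) = ((2:ℕ):ℝ) by norm_num, Real.rpow_natCast]
  have h := integral_rpow_mul_exp_neg_mul_rpow (p:=2) (q:=2) (b:=1/2)
    (by norm_num) (by norm_num) (by norm_num)
  simp only [h2] at h
  rw [h]
  have e1 : ((1:ℝ)/2) ^ (-(2+1)/2 : ℝ) = 2 * Real.sqrt 2 := by
    rw [show ((1:ℝ)/2) = 2⁻¹ from by norm_num, Real.inv_rpow (by norm_num),
      show (-(2+1)/2 : ℝ) = -(1 + 1/2) by norm_num,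
      Real.rpow_neg (by norm_num), inv_inv,
      Real.rpow_add (by norm_num), Real.rpow_one, ← Real.sqrt_eq_rpow]
  have e2 : Real.Gamma ((2+1)/2) = Real.sqrt π / 2 := by
    rw [show ((2+1)/2:ℝ) = 1/2 + 1 by norm_num,
      Real.Gamma_add_one (by norm_num), Real.Gamma_one_half_eq]
    ring
  rw [e1, e2, Real.sqrt_mul (by norm_num)]
  ring

lemma stdG_moment_two : ∫ x, x ^ 2 ∂stdG = 1 := by
  rw [stdG_integral]
  have hpdf : (fun x => gaussianPDFReal 0 1 x * x^2)
      = fun x => (Real.sqrt (2*π))⁻¹ * (x^2 * rexp (-(1/2)*x^2)) :=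
    funext fun x => by rw [pdf_eq]; ring
  rw [hpdf, integral_const_mul]
  have habs := integral_comp_abs (f := fun t => t^2 * rexp (-(1/2)*t^2))
  simp only [sq_abs] at habs
  rw [habs, aux_Ioi]
  have hne : Real.sqrt (2*π) ≠ 0 := ne_of_gt (Real.sqrt_pos.2 (by positivity))
  field_simp

instance : IsProbabilityMeasure stdG := by rw [stdG]; infer_instance

lemma map_rep (m : ℝ) (σ : ℝ≥0) :
    gaussianReal m (σ^2) = stdG.map (fun z => m + (σ:ℝ) * z) := by
  have h1 : (fun z : ℝ => m + (σ:ℝ) * z) = (fun y => m + y) ∘ (fun z => (σ:ℝ) * z) := rfl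
  rw [h1, ← Measure.map_map (measurable_const_add m) (measurable_const_mul _)]
  rw [stdG, gaussianReal_map_const_mul, gaussianReal_map_const_add]
  congr 1
  · ring
  · ext
    push_cast
    ring

section transfer
variable {Ω : Type*} [MeasurableSpace Ω] {γ : Measure Ω} {X : Ω → ℝ} {m : ℝ} {σ : ℝ≥0}

lemma integral_comp_gauss (hX : Measurable X) (hmap : γ.map X = gaussianReal m (σ^2))
    (f : ℝ → ℝ) (hf : Measurable f) :
    ∫ ω, f (X ω) ∂γ = ∫ z, f (m + (σ:ℝ) * z) ∂stdG := by
  have h1 : ∫ ω, f (X ω) ∂γ = ∫ y, f y ∂(γ.map X) :=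
    (integral_map hX.aemeasurable hf.aestronglyMeasurable).symm
  rw [h1, hmap, map_rep]
  exact integral_map (Measurable.aemeasurable (by fun_prop)) hf.aestronglyMeasurable

lemma integrable_comp_gauss (hX : Measurable X) (hmap : γ.map X = gaussianReal m (σ^2))
    (f : ℝ → ℝ) (hf : Measurable f)
    (h : Integrable (fun z => f (m + (σ:ℝ) * z)) stdG) :
    Integrable (fun ω => f (X ω)) γ := by
  have h2 : Integrable f (γ.map X) := by
    rw [hmap, map_rep]
    exact (integrable_map_measure hf.aestronglyMeasurable
      (Measurable.aemeasurable (by fun_prop))).mpr h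
  exact (integrable_map_measure hf.aestronglyMeasurable hX.aemeasurable).mp h2

lemma integrable_centered (hX : Measurable X) (hmap : γ.map X = gaussianReal m (σ^2)) :
    Integrable (fun ω => X ω - m) γ := by
  apply integrable_comp_gauss hX hmap (fun y => y - m) (measurable_id.sub_const m)
  have : (fun z : ℝ => m + (σ:ℝ)*z - m) = fun z => (σ:ℝ) * z := by funext z; ring
  rw [this]
  exact stdG_integrable_id.const_mul _

lemma integrable_centered_sq (hX : Measurable X) (hmap : γ.map X = gaussianReal m (σ^2)) :
    Integrable (fun ω => (X ω - m)^2) γ := by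
  apply integrable_comp_gauss hX hmap (fun y => (y - m)^2)
    ((measurable_id.sub_const m).pow_const 2)
  have : (fun z : ℝ => (m + (σ:ℝ)*z - m)^2) = fun z => (σ:ℝ)^2 * z^2 := by funext z; ring
  rw [this]
  exact stdG_integrable_sq.const_mul _

lemma integral_centered (hX : Measurable X) (hmap : γ.map X = gaussianReal m (σ^2)) :
    ∫ ω, (X ω - m) ∂γ = 0 := by
  rw [integral_comp_gauss hX hmap (fun y => y - m) (measurable_id.sub_const m)]
  have : (fun z : ℝ => m + (σ:ℝ)*z - m) = fun z => (σ:ℝ) * z := by funext z; ring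
  rw [this, integral_const_mul, stdG_moment_one, mul_zero]

lemma integral_centered_sq (hX : Measurable X) (hmap : γ.map X = gaussianReal m (σ^2)) :
    ∫ ω, (X ω - m)^2 ∂γ = (σ:ℝ)^2 := by
  rw [integral_comp_gauss hX hmap (fun y => (y - m)^2)
    ((measurable_id.sub_const m).pow_const 2)]
  have : (fun z : ℝ => (m + (σ:ℝ)*z - m)^2) = fun z => (σ:ℝ)^2 * z^2 := by funext z; ring
  rw [this, integral_const_mul, stdG_moment_two, mul_one]

end transfer

lemma lower_bound (m1 m2 : ℝ) (σ1 σ2 : ℝ≥0) (γ : Measure (ℝ × ℝ))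
    (hprob : IsProbabilityMeasure γ)
    (h1 : γ.map Prod.fst = gaussianReal m1 (σ1^2))
    (h2 : γ.map Prod.snd = gaussianReal m2 (σ2^2)) :
    (m1 - m2)^2 + ((σ1:ℝ) - (σ2:ℝ))^2 ≤ ∫ p, (p.1 - p.2)^2 ∂γ := by
  set c : ℝ := m1 - m2 with hc
  -- integrability facts
  have IA : Integrable (fun p : ℝ × ℝ => p.1 - m1) γ := integrable_centered measurable_fst h1
  have IB : Integrable (fun p : ℝ × ℝ => p.2 - m2) γ := integrable_centered measurable_snd h2
  have IA2 : Integrable (fun p : ℝ × ℝ => (p.1 - m1)^2) γ :=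
    integrable_centered_sq measurable_fst h1
  have IB2 : Integrable (fun p : ℝ × ℝ => (p.2 - m2)^2) γ :=
    integrable_centered_sq measurable_snd h2
  have EA : ∫ p, (p.1 - m1) ∂γ = 0 := integral_centered measurable_fst h1
  have EB : ∫ p, (p.2 - m2) ∂γ = 0 := integral_centered measurable_snd h2
  have EA2 : ∫ p, (p.1 - m1)^2 ∂γ = (σ1:ℝ)^2 := integral_centered_sq measurable_fst h1
  have EB2 : ∫ p, (p.2 - m2)^2 ∂γ = (σ2:ℝ)^2 := integral_centered_sq measurable_snd h2
  have IAB : Integrable (fun p : ℝ × ℝ => (p.1 - m1) * (p.2 - m2)) γ := by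
    refine (IA2.add IB2).mono' ?_ ?_
    · exact (((measurable_fst.sub_const m1).mul
        (measurable_snd.sub_const m2))).aestronglyMeasurable
    · filter_upwards with p
      have := sq_nonneg ((p.1 - m1) - (p.2 - m2))
      have := sq_nonneg ((p.1 - m1) + (p.2 - m2))
      rw [Real.norm_eq_abs, abs_le]
      constructor <;> simp only [Pi.add_apply] <;>
        nlinarith [sq_nonneg (p.1 - m1), sq_nonneg (p.2 - m2)]
  -- Cauchy-Schwarz via epsilon trick
  have key : ∀ ε : ℝ, 0 < ε →
      ∫ p, (p.1 - m1) * (p.2 - m2) ∂γ ≤ ((σ1:ℝ) + ε) * ((σ2:ℝ) + ε) := by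
    intro ε hε
    have ha : (0:ℝ) < (σ1:ℝ) + ε := by positivity
    have hb : (0:ℝ) < (σ2:ℝ) + ε := by positivity
    set t : ℝ := ((σ2:ℝ) + ε) / ((σ1:ℝ) + ε) with ht
    have ht0 : 0 < t := by positivity
    have hpt : ∀ p : ℝ × ℝ, (p.1 - m1) * (p.2 - m2) ≤
        t/2 * (p.1 - m1)^2 + 1/(2*t) * (p.2 - m2)^2 := by
      intro p
      set A := p.1 - m1
      set B := p.2 - m2
      have hsq : 2*t*(A*B) ≤ t^2*A^2 + B^2 := by nlinarith [sq_nonneg (t*A - B)]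
      have h2t : (0:ℝ) < 2*t := by linarith
      calc A*B = (2*t*(A*B))/(2*t) := by field_simp
        _ ≤ (t^2*A^2 + B^2)/(2*t) := by exact div_le_div_of_nonneg_right hsq h2t.le
        _ = t/2*A^2 + 1/(2*t)*B^2 := by field_simp
    have hint : ∫ p, (p.1 - m1) * (p.2 - m2) ∂γ ≤
        ∫ p, (t/2 * (p.1 - m1)^2 + 1/(2*t) * (p.2 - m2)^2) ∂γ :=
      integral_mono IAB ((IA2.const_mul _).add (IB2.const_mul _)) hpt
    rw [integral_add (IA2.const_mul _) (IB2.const_mul _), integral_const_mul,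
      integral_const_mul, EA2, EB2] at hint
    refine hint.trans ?_
    have k1 : t/2 * (σ1:ℝ)^2 ≤ t/2 * ((σ1:ℝ)+ε)^2 := by
      apply mul_le_mul_of_nonneg_left _ (by positivity)
      nlinarith [σ1.coe_nonneg]
    have k2 : 1/(2*t) * (σ2:ℝ)^2 ≤ 1/(2*t) * ((σ2:ℝ)+ε)^2 := by
      apply mul_le_mul_of_nonneg_left _ (by positivity)
      nlinarith [σ2.coe_nonneg]
    have k1' : t/2 * ((σ1:ℝ)+ε)^2 = ((σ2:ℝ)+ε) * ((σ1:ℝ)+ε) / 2 := by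
      rw [ht]; field_simp
    have k2' : 1/(2*t) * ((σ2:ℝ)+ε)^2 = ((σ1:ℝ)+ε) * ((σ2:ℝ)+ε) / 2 := by
      rw [ht]; field_simp
    nlinarith
  have hAB : ∫ p, (p.1 - m1) * (p.2 - m2) ∂γ ≤ (σ1:ℝ) * (σ2:ℝ) := by
    have cont : Filter.Tendsto (fun ε : ℝ => ((σ1:ℝ)+ε) * ((σ2:ℝ)+ε))
        (nhdsWithin 0 (Set.Ioi 0)) (nhds ((σ1:ℝ) * (σ2:ℝ))) := by
      have hcont : Continuous fun ε : ℝ => ((σ1:ℝ)+ε) * ((σ2:ℝ)+ε) := by continuity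
      have := hcont.tendsto 0
      simp only [add_zero] at this
      exact this.mono_left nhdsWithin_le_nhds
    exact ge_of_tendsto cont (eventually_nhdsWithin_of_forall fun ε hε => key ε hε)
  -- expand the square
  have expand : (fun p : ℝ × ℝ => (p.1 - p.2)^2) = fun p =>
      (p.1 - m1)^2 + ((p.2 - m2)^2 + ((-2) * ((p.1 - m1) * (p.2 - m2)) +
        ((2*c) * (p.1 - m1) + ((-2*c) * (p.2 - m2) + c^2)))) := by
    funext p
    simp only [hc]
    ring
  have I5 : Integrable (fun p : ℝ × ℝ => (-2*c) * (p.2 - m2) + c^2) γ :=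
    (IB.const_mul _).add (integrable_const _)
  have I4 : Integrable (fun p : ℝ × ℝ =>
      (2*c) * (p.1 - m1) + ((-2*c) * (p.2 - m2) + c^2)) γ := (IA.const_mul _).add I5
  have I3 : Integrable (fun p : ℝ × ℝ => (-2) * ((p.1 - m1) * (p.2 - m2)) +
      ((2*c) * (p.1 - m1) + ((-2*c) * (p.2 - m2) + c^2))) γ := (IAB.const_mul _).add I4
  have I2' : Integrable (fun p : ℝ × ℝ => (p.2 - m2)^2 +
      ((-2) * ((p.1 - m1) * (p.2 - m2)) +
      ((2*c) * (p.1 - m1) + ((-2*c) * (p.2 - m2) + c^2)))) γ := IB2.add I3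
  rw [expand, integral_add IA2 I2', integral_add IB2 I3,
    integral_add (IAB.const_mul _) I4,
    integral_add (IA.const_mul _) I5,
    integral_add (IB.const_mul _) (integrable_const _),
    integral_const_mul, integral_const_mul, integral_const_mul,
    EA, EB, EA2, EB2, integral_const]
  simp only [measure_univ, probReal_univ, ENNReal.toReal_one, smul_eq_mul, one_mul, mul_zero, add_zero]
  nlinarith

lemma upper_mem (m1 m2 : ℝ) (σ1 σ2 : ℝ≥0) :
    ((m1 - m2)^2 + ((σ1:ℝ) - (σ2:ℝ))^2) ∈ {r : ℝ |
      ∃ γ : Measure (ℝ × ℝ),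
        IsProbabilityMeasure γ ∧ γ.map Prod.fst = gaussianReal m1 (σ1^2) ∧
        γ.map Prod.snd = gaussianReal m2 (σ2^2) ∧
        r = ∫ p, (p.1 - p.2) ^ 2 ∂γ} := by
  have hF : Measurable (fun z : ℝ => (m1 + (σ1:ℝ) * z, m2 + (σ2:ℝ) * z)) := by fun_prop
  refine ⟨stdG.map (fun z : ℝ => (m1 + (σ1:ℝ) * z, m2 + (σ2:ℝ) * z)), ?_, ?_, ?_, ?_⟩
  · exact Measure.isProbabilityMeasure_map hF.aemeasurable
  · rw [Measure.map_map measurable_fst hF]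
    exact (map_rep m1 σ1).symm
  · rw [Measure.map_map measurable_snd hF]
    exact (map_rep m2 σ2).symm
  · rw [integral_map (f := fun p : ℝ × ℝ => (p.1 - p.2) ^ 2) hF.aemeasurable
      ((measurable_fst.sub measurable_snd).pow_const 2).aestronglyMeasurable]
    set c : ℝ := m1 - m2 with hc
    set d : ℝ := (σ1:ℝ) - (σ2:ℝ) with hd
    have e2 : (fun z : ℝ => ((m1 + (σ1:ℝ)*z, m2 + (σ2:ℝ)*z).1
        - (m1 + (σ1:ℝ)*z, m2 + (σ2:ℝ)*z).2)^2)
        = fun z => (2*c*d)*z + ((d^2)*z^2 + c^2) := by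
      funext z; simp only [hc, hd]; ring
    have J2 : Integrable (fun z : ℝ => (d^2)*z^2 + c^2) stdG :=
      (stdG_integrable_sq.const_mul _).add (integrable_const _)
    rw [e2, integral_add (stdG_integrable_id.const_mul _) J2,
      integral_add (stdG_integrable_sq.const_mul _) (integrable_const _),
      integral_const_mul, integral_const_mul, stdG_moment_one, stdG_moment_two,
      integral_const]
    simp only [measure_univ, probReal_univ, ENNReal.toReal_one, smul_eq_mul, one_mul, mul_zero, mul_one]
    ring

/-- For one-dimensional Gaussians `N(m₁,σ₁²)` and `N(m₂,σ₂²)`, the squared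
2-Wasserstein distance equals `(m₁ - m₂)² + (σ₁ - σ₂)²`. -/
theorem W2sq_gaussian_gaussian (m1 m2 : ℝ) (σ1 σ2 : ℝ≥0) :
    W2sq (gaussianReal m1 (σ1 ^ 2)) (gaussianReal m2 (σ2 ^ 2)) =
      (m1 - m2) ^ 2 + ((σ1 : ℝ) - (σ2 : ℝ)) ^ 2 := by
  rw [W2sq]
  apply le_antisymm
  · exact csInf_le ⟨_, fun r hr => by
      obtain ⟨γ, hp, hf, hs, rfl⟩ := hr
      exact lower_bound m1 m2 σ1 σ2 γ hp hf hs⟩ (upper_mem m1 m2 σ1 σ2)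
  · exact le_csInf ⟨_, upper_mem m1 m2 σ1 σ2⟩ (fun r hr => by
      obtain ⟨γ, hp, hf, hs, rfl⟩ := hr
      exact lower_bound m1 m2 σ1 σ2 γ hp hf hs)

end AuxW2sq
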